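/- Let 0 → I → 𝔄 →σ→ A → 0 be an extension of Banach algebras with 𝔄 I = 0, 𝔄² = 𝔄 (closed linear span of products is all of 𝔄), and suppose A has a right bounded approximate identity. Then 𝔄 has a right bounded approximate identity; more precisely, any bounded net (e_ν) in 𝔄 such that (σ(e_ν)) is a right b.a.i. in A is itself a right b.a.i. in 𝔄. -/

import Mathlib

noncomputable section

/-- A Banach algebra `B` has a right bounded approximate identity:
a bounded net `(e_ν)` with `‖b e_ν - b‖ → 0` for every `b`. -/
def HasRightBAI (B : Type) [NonUnitalNormedRing B] : Prop :=
  ∃ (ι : Type) (l : Filter ι) (e : ι → B), l.NeBot ∧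
    (∃ C : ℝ, ∀ᶠ n in l, ‖e n‖ ≤ C) ∧
    ∀ b : B, Filter.Tendsto (fun n => b * e n) l (nhds b)

lemma rbai_key
    {𝔄 A : Type} [NonUnitalNormedRing 𝔄] [NormedSpace ℂ 𝔄]
    [IsScalarTower ℂ 𝔄 𝔄] [SMulCommClass ℂ 𝔄 𝔄] [CompleteSpace 𝔄]
    [NonUnitalNormedRing A] [NormedSpace ℂ A]
    [IsScalarTower ℂ A A] [SMulCommClass ℂ A A] [CompleteSpace A]
    (σ : 𝔄 →L[ℂ] A) (hσmul : ∀ u v : 𝔄, σ (u * v) = σ u * σ v)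
    (hσsurj : Function.Surjective σ)
    (hAI : ∀ u x : 𝔄, σ x = 0 → u * x = 0)
    (hsq : (Submodule.span ℂ {w : 𝔄 | ∃ u v : 𝔄, w = u * v}).topologicalClosure = ⊤)
    (ι : Type) (l : Filter ι) (e : ι → 𝔄) (hne : l.NeBot)
    (hb : ∃ C : ℝ, ∀ᶠ n in l, ‖e n‖ ≤ C)
    (he : ∀ a : A, Filter.Tendsto (fun n => a * σ (e n)) l (nhds a)) :
    ∀ u : 𝔄, Filter.Tendsto (fun n => u * e n) l (nhds u) := by
  obtain ⟨C, hC⟩ := hb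
  obtain ⟨K, hK0, hK⟩ := ContinuousLinearMap.exists_preimage_norm_le σ hσsurj
  -- key norm estimate: ‖v * x‖ ≤ ‖v‖ * K * ‖σ x‖
  have hest : ∀ v x : 𝔄, ‖v * x‖ ≤ ‖v‖ * K * ‖σ x‖ := by
    intro v x
    obtain ⟨y, hy, hyn⟩ := hK (σ x)
    have : v * x = v * y := by
      have h0 : v * (x - y) = 0 := hAI v (x - y) (by simp [hy])
      have := sub_eq_zero.mp (by simpa [mul_sub] using h0)
      exact this
    rw [this]
    calc ‖v * y‖ ≤ ‖v‖ * ‖y‖ := norm_mul_le _ _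
      _ ≤ ‖v‖ * (K * ‖σ x‖) := by
          exact mul_le_mul_of_nonneg_left hyn (norm_nonneg v)
      _ = ‖v‖ * K * ‖σ x‖ := by ring
  set C' : ℝ := max C 0 with hC'
  have hC'n : 0 ≤ C' := le_max_right _ _
  have hC'b : ∀ᶠ n in l, ‖e n‖ ≤ C' := hC.mono fun n h => h.trans (le_max_left _ _)
  -- The set of u satisfying the conclusion is a submodule
  set S : Submodule ℂ 𝔄 :=
    { carrier := {u : 𝔄 | Filter.Tendsto (fun n => u * e n) l (nhds u)}
      add_mem' := by
        intro u v hu hv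
        simpa [add_mul] using hu.add hv
      zero_mem' := by simpa using (tendsto_const_nhds : Filter.Tendsto (fun _ : ι => (0:𝔄)) l (nhds 0))
      smul_mem' := by
        intro c u hu
        simpa [smul_mul_assoc] using hu.const_smul c } with hS
  -- S is closed
  have hclosed : IsClosed (S : Set 𝔄) := by
    apply isClosed_of_closure_subset
    intro u hu
    have hden : (0:ℝ) < 3 * (C' + 1) := by positivity
    show Filter.Tendsto (fun n => u * e n) l (nhds u)
    rw [Metric.tendsto_nhds]
    intro ε hε
    obtain ⟨u', hu'S, hu'd⟩ := Metric.mem_closure_iff.mp hu (ε / (3 * (C' + 1)))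
      (by positivity)
    have hu'T : Filter.Tendsto (fun n => u' * e n) l (nhds u') := hu'S
    filter_upwards [hC'b, Metric.tendsto_nhds.mp hu'T (ε / 3) (by positivity)]
      with n hn1 hn2
    have h1 : dist (u * e n) (u' * e n) ≤ dist u u' * C' := by
      rw [dist_eq_norm, dist_eq_norm, ← sub_mul]
      calc ‖(u - u') * e n‖ ≤ ‖u - u'‖ * ‖e n‖ := norm_mul_le _ _
        _ ≤ ‖u - u'‖ * C' := mul_le_mul_of_nonneg_left hn1 (norm_nonneg _)
    have h1' : dist u u' * C' < ε / 3 := by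
      calc dist u u' * C' ≤ dist u u' * (C' + 1) :=
            mul_le_mul_of_nonneg_left (by linarith) dist_nonneg
        _ < ε / (3 * (C' + 1)) * (C' + 1) := by
            apply mul_lt_mul_of_pos_right hu'd; linarith
        _ = ε / 3 := by field_simp
    have h3 : dist u' u < ε / 3 := by
      rw [dist_comm]
      calc dist u u' < ε / (3 * (C' + 1)) := hu'd
        _ ≤ ε / 3 := by
            apply div_le_div_of_nonneg_left (le_of_lt hε) (by norm_num) <;> linarith
    calc dist (u * e n) u ≤ dist (u * e n) (u' * e n) + dist (u' * e n) u' + dist u' u :=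
          dist_triangle4 _ _ _ _
      _ < ε / 3 + ε / 3 + ε / 3 := by
          have := lt_of_le_of_lt h1 h1'
          linarith
      _ = ε := by ring
  -- S contains all products
  have hprod : ∀ v w : 𝔄, v * w ∈ S := by
    intro v w
    show Filter.Tendsto (fun n => (v * w) * e n) l (nhds (v * w))
    rw [← tendsto_sub_nhds_zero_iff]
    have hbound : ∀ n, ‖(v * w) * e n - v * w‖ ≤ ‖v‖ * K * ‖σ w * σ (e n) - σ w‖ := by
      intro n
      have heq : (v * w) * e n - v * w = v * (w * e n - w) := by
        rw [mul_sub, mul_assoc]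
      rw [heq]
      calc ‖v * (w * e n - w)‖ ≤ ‖v‖ * K * ‖σ (w * e n - w)‖ := hest v _
        _ = ‖v‖ * K * ‖σ w * σ (e n) - σ w‖ := by rw [map_sub, hσmul]
    have hg : Filter.Tendsto (fun n => ‖v‖ * K * ‖σ w * σ (e n) - σ w‖) l (nhds 0) := by
      have h0 : Filter.Tendsto (fun n => σ w * σ (e n) - σ w) l (nhds 0) :=
        tendsto_sub_nhds_zero_iff.mpr (he (σ w))
      have h1 : Filter.Tendsto (fun n => ‖σ w * σ (e n) - σ w‖) l (nhds 0) := by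
        simpa using h0.norm
      simpa using h1.const_mul (‖v‖ * K)
    exact squeeze_zero_norm hbound hg
  -- conclude via density
  have hspan : Submodule.span ℂ {w : 𝔄 | ∃ u v : 𝔄, w = u * v} ≤ S := by
    rw [Submodule.span_le]
    rintro x ⟨u, v, rfl⟩
    exact hprod u v
  have htop : (⊤ : Submodule ℂ 𝔄) ≤ S := by
    rw [← hsq]
    exact Submodule.topologicalClosure_minimal _ hspan hclosed
  intro u
  exact htop (Submodule.mem_top (R := ℂ) (M := 𝔄))

theorem rbai_lifts_along_extension
    {𝔄 A : Type} [NonUnitalNormedRing 𝔄] [NormedSpace ℂ 𝔄]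
    [IsScalarTower ℂ 𝔄 𝔄] [SMulCommClass ℂ 𝔄 𝔄] [CompleteSpace 𝔄]
    [NonUnitalNormedRing A] [NormedSpace ℂ A]
    [IsScalarTower ℂ A A] [SMulCommClass ℂ A A] [CompleteSpace A]
    (σ : 𝔄 →L[ℂ] A) (hσmul : ∀ u v : 𝔄, σ (u * v) = σ u * σ v)
    (hσsurj : Function.Surjective σ)
    (hAI : ∀ u x : 𝔄, σ x = 0 → u * x = 0)
    -- 𝔄² = 𝔄
    (hsq : (Submodule.span ℂ {w : 𝔄 | ∃ u v : 𝔄, w = u * v}).topologicalClosure = ⊤)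
    -- A has a right b.a.i.
    (hA : HasRightBAI A) :
    -- 𝔄 has a right b.a.i. ...
    HasRightBAI 𝔄 ∧
    -- ... and more precisely: every bounded net in 𝔄 whose image under σ is a
    -- right b.a.i. in A is itself a right b.a.i. in 𝔄
    (∀ (ι : Type) (l : Filter ι) (e : ι → 𝔄), l.NeBot →
      (∃ C : ℝ, ∀ᶠ n in l, ‖e n‖ ≤ C) →
      (∀ a : A, Filter.Tendsto (fun n => a * σ (e n)) l (nhds a)) →
      ∀ u : 𝔄, Filter.Tendsto (fun n => u * e n) l (nhds u)) := by
  obtain ⟨K, hK0, hK⟩ := ContinuousLinearMap.exists_preimage_norm_le σ hσsurj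
  refine ⟨?_, fun ι l e hne hb he => rbai_key σ hσmul hσsurj hAI hsq ι l e hne hb he⟩
  obtain ⟨ι, l, f, hne, ⟨C, hC⟩, hf⟩ := hA
  choose g hg hgn using fun n => hK (f n)
  refine ⟨ι, l, g, hne, ⟨K * C, ?_⟩, ?_⟩
  · exact hC.mono fun n h => (hgn n).trans (by
      exact mul_le_mul_of_nonneg_left h (le_of_lt hK0))
  · refine rbai_key σ hσmul hσsurj hAI hsq ι l g hne ⟨K * C, ?_⟩ ?_
    · exact hC.mono fun n h => (hgn n).trans (mul_le_mul_of_nonneg_left h (le_of_lt hK0))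
    · intro a; simpa [hg] using hf a
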